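/- There exists a constant C > 0 such that the following holds: for all D > 0, δ > 0, reals K ≥ 1 and R ≥ 1, every function u : ℤ³ → ℂ with u(0) = 0, with |u(β)| ≤ D/|β|² for all β ≠ 0, and with |u(α)| ≤ δ/|α|² for all α with |α| ≥ R, and every k ∈ ℤ³ with |k| ≥ 2K and |k| ≥ 2R, one has Σ_{α ∈ ℤ³, |α| ≤ 2|k|, 0 < |k−α| ≤ K} |α|·|u(α)|·|u(k−α)| ≤ C·δ·D·K/|k|. -/

import Mathlib

/-- The Euclidean norm of a lattice point in `ℤ³`. -/
noncomputable def znorm (a : Fin 3 → ℤ) : ℝ := Real.sqrt (∑ i, ((a i : ℝ)) ^ 2)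

namespace LowCof

noncomputable def v (a : Fin 3 → ℤ) : EuclideanSpace ℝ (Fin 3) := WithLp.toLp 2 (fun i => (a i : ℝ))

lemma znorm_eq_norm (a : Fin 3 → ℤ) : znorm a = ‖v a‖ := by
  rw [EuclideanSpace.norm_eq]
  simp [znorm, v, sq_abs]

lemma znorm_nonneg (a : Fin 3 → ℤ) : 0 ≤ znorm a := Real.sqrt_nonneg _

lemma znorm_zero : znorm 0 = 0 := by simp [znorm]

lemma v_sub (k a : Fin 3 → ℤ) : v (k - a) = v k - v a := by
  ext i
  simp [v]

lemma znorm_sub_le (k a : Fin 3 → ℤ) : znorm k ≤ znorm (k - a) + znorm a := by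
  rw [znorm_eq_norm, znorm_eq_norm, znorm_eq_norm, v_sub]
  have := norm_sub_norm_le (v k) (v a)
  linarith

lemma abs_coord_le (a : Fin 3 → ℤ) (i : Fin 3) : |(a i : ℝ)| ≤ znorm a := by
  rw [znorm, ← Real.sqrt_sq_eq_abs]
  exact Real.sqrt_le_sqrt (Finset.single_le_sum (f := fun j => ((a j : ℝ))^2)
    (fun _ _ => sq_nonneg _) (Finset.mem_univ i))

noncomputable def box (n : ℕ) : Finset (Fin 3 → ℤ) := Finset.Icc (fun _ => -(n:ℤ)) (fun _ => (n:ℤ))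

lemma mem_box {n : ℕ} {a : Fin 3 → ℤ} : a ∈ box n ↔ ∀ i, -(n:ℤ) ≤ a i ∧ a i ≤ n := by
  simp [box, Finset.mem_Icc, Pi.le_def, forall_and]

lemma card_box (n : ℕ) : (box n).card = (2*n+1)^3 := by
  rw [box, Pi.card_Icc]
  have : ∀ i : Fin 3, (Finset.Icc (-(n:ℤ)) (n:ℤ)).card = 2*n+1 := by
    intro i; rw [Int.card_Icc]; omega
  simp [Int.card_Icc]
  omega

end LowCof

namespace LowCof

lemma zero_mem_box (n : ℕ) : (0 : Fin 3 → ℤ) ∈ box n := by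
  rw [mem_box]; intro i; simp

lemma box_mono {m n : ℕ} (h : m ≤ n) : box m ⊆ box n := by
  intro a ha
  rw [mem_box] at ha ⊢
  intro i
  have := ha i
  omega

lemma shell_norm {n : ℕ} {a : Fin 3 → ℤ} (h1 : a ∈ box (n+1)) (h2 : a ∉ box n) :
    ((n:ℝ)+1) ≤ znorm a := by
  rw [mem_box] at h1
  rw [mem_box] at h2
  push_neg at h2
  obtain ⟨i, hi⟩ := h2
  have h3 := h1 i
  have h4 : ((n:ℤ)+1) ≤ |a i| := by
    rcases abs_cases (a i) with ⟨h, _⟩ | ⟨h, _⟩ <;> omega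
  calc ((n:ℝ)+1) ≤ |(a i : ℝ)| := by
        rw [← Int.cast_abs]; exact_mod_cast h4
    _ ≤ znorm a := abs_coord_le a i

lemma box_sum (n : ℕ) : ∑ a ∈ box n \ {0}, 1 / znorm a ^ 2 ≤ 26 * (n:ℝ) := by
  induction n with
  | zero =>
    have : box 0 \ {0} = ∅ := by
      rw [Finset.sdiff_eq_empty_iff_subset]
      intro a ha
      rw [mem_box] at ha
      simp only [Finset.mem_singleton]
      funext i
      have := ha i
      simp at this ⊢
      omega
    simp [this]
  | succ n ih =>
    have hsub : box n \ {0} ⊆ box (n+1) \ {0} :=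
      Finset.sdiff_subset_sdiff (box_mono (Nat.le_succ n)) (le_refl _)
    have key : (box (n+1) \ {0}) \ (box n \ {0}) = box (n+1) \ box n := by
      ext a
      simp only [Finset.mem_sdiff, Finset.mem_singleton]
      constructor
      · rintro ⟨⟨h1, h2⟩, h3⟩
        exact ⟨h1, fun hn => h3 ⟨hn, h2⟩⟩
      · rintro ⟨h1, h2⟩
        exact ⟨⟨h1, fun h0 => h2 (h0 ▸ zero_mem_box n)⟩, fun h => h2 h.1⟩
    rw [← Finset.sum_sdiff hsub, key]
    have hcard : ((box (n+1) \ box n).card : ℝ) ≤ 26 * ((n:ℝ)+1)^2 := by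
      rw [Finset.card_sdiff_of_subset (box_mono (Nat.le_succ n)), card_box, card_box]
      have h1 : ((2*(n+1)+1)^3 - (2*n+1)^3 : ℕ) ≤ 26 * (n+1)^2 := by
        rw [Nat.sub_le_iff_le_add]
        zify
        nlinarith [sq_nonneg (n:ℤ), Int.natCast_nonneg n]
      calc (((2*(n+1)+1)^3 - (2*n+1)^3 : ℕ) : ℝ) ≤ ((26 * (n+1)^2 : ℕ) : ℝ) := by exact_mod_cast h1
        _ = 26 * ((n:ℝ)+1)^2 := by push_cast; ring
    have hshell : ∑ a ∈ box (n+1) \ box n, 1 / znorm a ^ 2 ≤ 26 := by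
      have hterm : ∀ a ∈ box (n+1) \ box n, 1 / znorm a ^ 2 ≤ 1 / ((n:ℝ)+1)^2 := by
        intro a ha
        rw [Finset.mem_sdiff] at ha
        have h := shell_norm ha.1 ha.2
        have hpos : (0:ℝ) < ((n:ℝ)+1) := by positivity
        apply div_le_div_of_nonneg_left one_pos.le (by positivity)
        exact pow_le_pow_left₀ hpos.le h 2
      calc ∑ a ∈ box (n+1) \ box n, 1 / znorm a ^ 2
          ≤ ∑ _a ∈ box (n+1) \ box n, 1 / ((n:ℝ)+1)^2 := Finset.sum_le_sum hterm
        _ = ((box (n+1) \ box n).card : ℝ) * (1 / ((n:ℝ)+1)^2) := by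
            rw [Finset.sum_const, nsmul_eq_mul]
        _ ≤ 26 * ((n:ℝ)+1)^2 * (1 / ((n:ℝ)+1)^2) := by
            apply mul_le_mul_of_nonneg_right hcard; positivity
        _ = 26 := by field_simp
    push_cast
    linarith

end LowCof


/-- There is a constant `C > 0` such that: for all `D > 0`, `δ > 0`, `K ≥ 1`, `R ≥ 1`,
every `u : ℤ³ → ℂ` with `u 0 = 0`, `|u β| ≤ D/|β|²` for all `β ≠ 0`, and
`|u α| ≤ δ/|α|²` for `|α| ≥ R`, and every `k` with `|k| ≥ 2K` and `|k| ≥ 2R`,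
`∑_{|α| ≤ 2|k|, 0 < |k−α| ≤ K} |α|·|u α|·|u (k−α)| ≤ C·δ·D·K/|k|`. -/
theorem low_cofrequency_piece_bound :
    ∃ C : ℝ, 0 < C ∧
      ∀ (D δ K R : ℝ), 0 < D → 0 < δ → 1 ≤ K → 1 ≤ R →
        ∀ u : (Fin 3 → ℤ) → ℂ, u 0 = 0 →
          (∀ β : Fin 3 → ℤ, β ≠ 0 → ‖u β‖ ≤ D / znorm β ^ 2) →
          (∀ α : Fin 3 → ℤ, R ≤ znorm α → ‖u α‖ ≤ δ / znorm α ^ 2) →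
          ∀ k : Fin 3 → ℤ, 2 * K ≤ znorm k → 2 * R ≤ znorm k →
            (∑' α : {a : Fin 3 → ℤ //
                znorm a ≤ 2 * znorm k ∧ 0 < znorm (k - a) ∧ znorm (k - a) ≤ K},
              znorm α.1 * ‖u α.1‖ * ‖u (k - α.1)‖)
              ≤ C * δ * D * K / znorm k := by
  refine ⟨104, by norm_num, ?_⟩
  intro D δ K R hD hδ hK hR u hu0 hDb hδb k hkK hkR
  have hk0 : (0:ℝ) < znorm k := by linarith
  apply tsum_le_of_sum_le'
  · positivity
  intro s
  -- per-term bound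
  have hterm : ∀ α : {a : Fin 3 → ℤ //
      znorm a ≤ 2 * znorm k ∧ 0 < znorm (k - a) ∧ znorm (k - a) ≤ K}, znorm α.1 * ‖u α.1‖ * ‖u (k - α.1)‖ ≤
      (2 * δ * D / znorm k) * (1 / znorm (k - α.1) ^ 2) := by
    rintro ⟨a, ha1, ha2, ha3⟩
    have hka : znorm (k - a) ≤ znorm k / 2 := by linarith
    have htri := LowCof.znorm_sub_le k a
    have hak : znorm k / 2 ≤ znorm a := by linarith
    have haR : R ≤ znorm a := by linarith
    have hapos : (0:ℝ) < znorm a := by linarith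
    have hne : k - a ≠ 0 := by
      intro h
      rw [h, LowCof.znorm_zero] at ha2
      exact lt_irrefl _ ha2
    have h1 : ‖u a‖ ≤ δ / znorm a ^ 2 := hδb a haR
    have h2 : ‖u (k - a)‖ ≤ D / znorm (k - a) ^ 2 := hDb _ hne
    calc znorm a * ‖u a‖ * ‖u (k - a)‖
        ≤ znorm a * (δ / znorm a ^ 2) * (D / znorm (k - a) ^ 2) := by
          apply mul_le_mul (mul_le_mul_of_nonneg_left h1 (LowCof.znorm_nonneg a)) h2
            (norm_nonneg _) (by positivity)
      _ = (δ * D / znorm a) * (1 / znorm (k - a) ^ 2) := by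
          field_simp
      _ ≤ (2 * δ * D / znorm k) * (1 / znorm (k - a) ^ 2) := by
          apply mul_le_mul_of_nonneg_right _ (by positivity)
          rw [div_le_div_iff₀ hapos hk0]
          nlinarith [mul_le_mul_of_nonneg_left hak (mul_pos hδ hD).le]
  -- the injection into the box
  set N : ℕ := ⌈K⌉₊
  have hKN : K ≤ (N:ℝ) := Nat.le_ceil K
  have hNK : (N:ℝ) ≤ 2 * K := by
    have := Nat.ceil_lt_add_one (by linarith : (0:ℝ) ≤ K)
    linarith
  have himg : ∀ a : Fin 3 → ℤ, 0 < znorm (k - a) → znorm (k - a) ≤ K →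
      k - a ∈ LowCof.box N \ {0} := by
    intro a ha2 ha3
    rw [Finset.mem_sdiff, LowCof.mem_box, Finset.mem_singleton]
    constructor
    · intro i
      have h := LowCof.abs_coord_le (k - a) i
      have h1 : |((k - a) i : ℝ)| ≤ (N:ℝ) := by linarith
      rw [← Int.cast_abs] at h1
      have h2 : |(k - a) i| ≤ (N:ℤ) := by exact_mod_cast h1
      rcases abs_cases ((k - a) i) with ⟨he, _⟩ | ⟨he, _⟩ <;> constructor <;> omega
    · intro h
      rw [h, LowCof.znorm_zero] at ha2
      exact lt_irrefl _ ha2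
  have hinj : ∀ (x : {a : Fin 3 → ℤ //
      znorm a ≤ 2 * znorm k ∧ 0 < znorm (k - a) ∧ znorm (k - a) ≤ K}) (y), 
      k - x.1 = k - y.1 → x = y := by
    intro x y h
    apply Subtype.ext
    funext i
    have := congrFun h i
    simp at this
    omega
  calc ∑ α ∈ s, znorm α.1 * ‖u α.1‖ * ‖u (k - α.1)‖
      ≤ ∑ α ∈ s, (2 * δ * D / znorm k) * (1 / znorm (k - α.1) ^ 2) :=
        Finset.sum_le_sum fun α _ => hterm α
    _ = (2 * δ * D / znorm k) * ∑ α ∈ s, 1 / znorm (k - α.1) ^ 2 := by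
        rw [Finset.mul_sum]
    _ = (2 * δ * D / znorm k) * ∑ β ∈ s.image (fun α => k - α.1), 1 / znorm β ^ 2 := by
        rw [Finset.sum_image (fun x _ y _ h => hinj x y h)]
    _ ≤ (2 * δ * D / znorm k) * ∑ β ∈ LowCof.box N \ {0}, 1 / znorm β ^ 2 := by
        apply mul_le_mul_of_nonneg_left _ (by positivity)
        apply Finset.sum_le_sum_of_subset_of_nonneg
        · intro β hβ
          obtain ⟨α, _, rfl⟩ := Finset.mem_image.mp hβ
          exact himg α.1 α.2.2.1 α.2.2.2
        · intro β _ _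
          positivity
    _ ≤ (2 * δ * D / znorm k) * (26 * (N:ℝ)) := by
        apply mul_le_mul_of_nonneg_left (LowCof.box_sum N) (by positivity)
    _ ≤ (2 * δ * D / znorm k) * (52 * K) := by
        apply mul_le_mul_of_nonneg_left (by linarith) (by positivity)
    _ = 104 * δ * D * K / znorm k := by
        field_simp; ring
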